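/- Sufficient condition for strong positive definiteness: Let A_c, Δ ∈ ℝ^{n×n} be symmetric with Δ ≥ 0 entrywise. If the smallest eigenvalue of A_c is strictly greater than the spectral radius of Δ, then every symmetric real matrix A with |A − A_c| ≤ Δ entrywise is positive definite. -/

import Mathlib

open Matrix

lemma quad_eq_sum {n : ℕ} {M : Matrix (Fin n) (Fin n) ℝ} (hM : M.IsHermitian)
    (x : Fin n → ℝ) :
    ∃ y : Fin n → ℝ, x ⬝ᵥ M *ᵥ x = ∑ i, hM.eigenvalues i * (y i)^2 ∧
      x ⬝ᵥ x = ∑ i, (y i)^2 := by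
  set U : Matrix (Fin n) (Fin n) ℝ := (hM.eigenvectorUnitary : Matrix (Fin n) (Fin n) ℝ) with hUdef
  have hU : U * star U = 1 := (Matrix.mem_unitaryGroup_iff).mp hM.eigenvectorUnitary.2
  have hU2 : star U * U = 1 := (Matrix.mem_unitaryGroup_iff').mp hM.eigenvectorUnitary.2
  have hsU2 : star U = Uᵀ := by
    simp [Matrix.star_eq_conjTranspose, Matrix.conjTranspose]
    ext i j; simp [Matrix.map_apply]
  set y := star U *ᵥ x with hy
  have hx : x ᵥ* U = y := by rw [hy, ← mulVec_transpose, hsU2]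
  refine ⟨y, ?_, ?_⟩
  · conv_lhs => rw [hM.spectral_theorem, Unitary.conjStarAlgAut_apply]
    rw [← hUdef, ← mulVec_mulVec, ← mulVec_mulVec, dotProduct_mulVec x U, hx, ← hy]
    simp [dotProduct, mulVec_diagonal]
    exact Finset.sum_congr rfl fun i _ => by ring
  · have hxy : U *ᵥ y = x := by rw [hy, mulVec_mulVec, hU, one_mulVec]
    have : x ⬝ᵥ x = y ⬝ᵥ y := by
      conv_lhs => rw [← hxy]
      rw [dotProduct_mulVec, ← mulVec_transpose, mulVec_mulVec, ← hsU2, hU2, one_mulVec]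
    rw [this]
    simp [dotProduct, sq]

lemma real_spec_to_complex {n : ℕ} (Δ : Matrix (Fin n) (Fin n) ℝ) {t : ℝ}
    (ht : t ∈ spectrum ℝ Δ) : (t : ℂ) ∈ spectrum ℂ (Δ.map Complex.ofReal) := by
  rw [spectrum.mem_iff] at ht ⊢
  intro hunit
  apply ht
  rw [Matrix.isUnit_iff_isUnit_det] at hunit ⊢
  have key : (algebraMap ℂ (Matrix (Fin n) (Fin n) ℂ) (t:ℂ) - Δ.map Complex.ofReal)
      = (algebraMap ℝ (Matrix (Fin n) (Fin n) ℝ) t - Δ).map Complex.ofReal := by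
    ext i j
    simp [Matrix.algebraMap_matrix_apply, Matrix.map_apply, apply_ite]
  have hdet : (((algebraMap ℝ (Matrix (Fin n) (Fin n) ℝ)) t - Δ).map Complex.ofReal).det
      = (((algebraMap ℝ (Matrix (Fin n) (Fin n) ℝ)) t - Δ).det : ℂ) := by
    exact (RingHom.map_det Complex.ofRealHom _).symm
  rw [key, hdet] at hunit
  rw [isUnit_iff_ne_zero] at hunit ⊢
  simpa using hunit



/-- Sufficient condition for strong positive definiteness: if the smallest
eigenvalue of `A_c` is strictly greater than the spectral radius of `Δ` (i.e.
every complex eigenvalue of `Δ` has modulus less than `λ_min(A_c)`), then every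
symmetric matrix `A` with `|A - A_c| ≤ Δ` entrywise is positive definite. -/
theorem strongly_posDef_of_eigenvalue_condition {n : ℕ}
    (Ac Δ : Matrix (Fin n) (Fin n) ℝ)
    (hAc : Ac.IsHermitian) (hΔsym : Δ.IsHermitian) (hΔ : ∀ i j, 0 ≤ Δ i j)
    (h : ∀ μ ∈ spectrum ℂ (Δ.map (Complex.ofReal)), ‖μ‖ < ⨅ i, hAc.eigenvalues i) :
    ∀ A : Matrix (Fin n) (Fin n) ℝ, A.IsHermitian →
      (∀ i j, |A i j - Ac i j| ≤ Δ i j) → A.PosDef := by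
  intro A hA hbound
  refine Matrix.posDef_iff_dotProduct_mulVec.mpr ⟨hA, ?_⟩
  intro x hx
  rcases Nat.eq_zero_or_pos n with hn | hn
  · subst hn
    exact absurd (Subsingleton.elim x 0) hx
  haveI : Nonempty (Fin n) := Fin.pos_iff_nonempty.mp hn
  set m := ⨅ i, hAc.eigenvalues i with hm
  have hsm : ∀ i, hΔsym.eigenvalues i < m := by
    intro i
    have h2 := real_spec_to_complex Δ (hΔsym.eigenvalues_mem_spectrum_real i)
    have h3 := h _ h2
    rw [Complex.norm_real] at h3
    exact lt_of_le_of_lt (le_abs_self _) h3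
  obtain ⟨i0, hi0⟩ := Finite.exists_max hΔsym.eigenvalues
  set s := hΔsym.eigenvalues i0 with hs
  obtain ⟨y, hAc1, hAc2⟩ := quad_eq_sum hAc x
  obtain ⟨z, hΔ1, hΔ2⟩ := quad_eq_sum hΔsym (fun i => |x i|)
  have hxx : 0 < x ⬝ᵥ x := by
    obtain ⟨i, hi⟩ := Function.ne_iff.mp hx
    exact Finset.sum_pos' (fun j _ => mul_self_nonneg _)
      ⟨i, Finset.mem_univ i, mul_self_pos.mpr hi⟩
  have habs : (fun i => |x i|) ⬝ᵥ (fun i => |x i|) = x ⬝ᵥ x := by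
    simp [dotProduct, abs_mul_abs_self]
  have hlow : m * (x ⬝ᵥ x) ≤ x ⬝ᵥ Ac *ᵥ x := by
    rw [hAc1, hAc2, Finset.mul_sum]
    exact Finset.sum_le_sum fun i _ =>
      mul_le_mul_of_nonneg_right (ciInf_le (Finite.bddBelow_range _) i) (sq_nonneg _)
  have hupp : (fun i => |x i|) ⬝ᵥ Δ *ᵥ (fun i => |x i|) ≤ s * (x ⬝ᵥ x) := by
    rw [hΔ1, ← habs, hΔ2, Finset.mul_sum]
    exact Finset.sum_le_sum fun i _ =>
      mul_le_mul_of_nonneg_right (hi0 i) (sq_nonneg _)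
  have hEabs : |x ⬝ᵥ (A - Ac) *ᵥ x| ≤ (fun i => |x i|) ⬝ᵥ Δ *ᵥ (fun i => |x i|) := by
    simp only [dotProduct, Matrix.mulVec, Matrix.sub_apply]
    calc |∑ i, x i * ∑ j, (A i j - Ac i j) * x j|
        ≤ ∑ i, |x i * ∑ j, (A i j - Ac i j) * x j| := Finset.abs_sum_le_sum_abs _ _
      _ ≤ ∑ i, |x i| * ∑ j, Δ i j * |x j| := by
          refine Finset.sum_le_sum fun i _ => ?_
          rw [abs_mul]
          refine mul_le_mul_of_nonneg_left ?_ (abs_nonneg _)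
          calc |∑ j, (A i j - Ac i j) * x j|
              ≤ ∑ j, |(A i j - Ac i j) * x j| := Finset.abs_sum_le_sum_abs _ _
            _ ≤ ∑ j, Δ i j * |x j| := Finset.sum_le_sum fun j _ => by
                rw [abs_mul]
                exact mul_le_mul_of_nonneg_right (hbound i j) (abs_nonneg _)
  have hE : -((fun i => |x i|) ⬝ᵥ Δ *ᵥ (fun i => |x i|)) ≤ x ⬝ᵥ (A - Ac) *ᵥ x :=
    neg_le_of_abs_le hEabs
  have hsplit : x ⬝ᵥ A *ᵥ x = x ⬝ᵥ Ac *ᵥ x + x ⬝ᵥ (A - Ac) *ᵥ x := by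
    rw [Matrix.sub_mulVec, dotProduct_sub]
    ring
  have hstar : star x = x := by
    funext i
    exact star_trivial _
  have hprod : 0 < m * (x ⬝ᵥ x) - s * (x ⬝ᵥ x) := by
    have := mul_pos (sub_pos.mpr (hsm i0)) hxx
    rw [sub_mul] at this
    exact this
  rw [hstar]
  linarith
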